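/- For any composition α = (a, b) with two parts, the rank sequence of the lattice L(α) of lower order ideals of the fence F(a,b) is bottom interlacing. -/

import Mathlib

open Polynomial

/-- The order relation of the fence poset `F(α)` on positions `0,…,α.sum`
(position `p` corresponds to the element `x_{p+1}`).  Segment `j` (0-indexed)
occupies positions `(α.take j).sum` through `(α.take (j+1)).sum`; even-indexed
segments are ascending and odd-indexed segments are descending. -/
def fenceLe (α : List ℕ) (p q : ℕ) : Prop :=
  p = q ∨ ∃ j < α.length,
    if j % 2 = 0 then
      (α.take j).sum ≤ p ∧ p ≤ q ∧ q ≤ (α.take (j + 1)).sum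
    else
      (α.take j).sum ≤ q ∧ q ≤ p ∧ p ≤ (α.take (j + 1)).sum

/-- `I` is a lower order ideal of the fence `F(α)`. -/
def IsFenceIdeal (α : List ℕ) (I : Finset (Fin (α.sum + 1))) : Prop :=
  ∀ p q : Fin (α.sum + 1), fenceLe α p q → q ∈ I → p ∈ I

/-- The number of lower order ideals of `F(α)` of cardinality `k`,
i.e. the size of the `k`-th rank of the distributive lattice `L(α)`. -/
noncomputable def fenceRk (α : List ℕ) (k : ℕ) : ℕ :=
  Nat.card {I : Finset (Fin (α.sum + 1)) // IsFenceIdeal α I ∧ I.card = k}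

/-- The rank generating function `r(q;α)` of `L(α)`. -/
noncomputable def rpoly (α : List ℕ) : Polynomial ℕ :=
  ∑ k ∈ Finset.range (α.sum + 2), Polynomial.C (fenceRk α k) * Polynomial.X ^ k

/-- The sequence `a₀,…,a_n` is bottom interlacing:
`a_n ≤ a₀ ≤ a_{n-1} ≤ a₁ ≤ … ≤ a_{⌊n/2⌋}`. -/
def BottomInterlacing (r : ℕ → ℕ) (n : ℕ) : Prop :=
  (∀ i, 2 * i < n → r (n - i) ≤ r i) ∧ ∀ i, 2 * i + 1 < n → r i ≤ r (n - 1 - i)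

namespace FenceAux

lemma fenceLe_pair {a b p q : ℕ} :
    fenceLe [a, b] p q ↔ p = q ∨ (p ≤ q ∧ q ≤ a) ∨ (a ≤ q ∧ q ≤ p ∧ p ≤ a + b) := by
  unfold fenceLe
  constructor
  · rintro (h | ⟨j, hj, h⟩)
    · exact Or.inl h
    · simp only [List.length] at hj
      interval_cases j <;> simp_all
  · rintro (h | h | h)
    · exact Or.inl h
    · exact Or.inr ⟨0, by norm_num, by simpa using h⟩
    · exact Or.inr ⟨1, by norm_num, by simpa using h⟩

/-- moving elements down along the fence order within an ideal,
stated with explicit natural numbers. -/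
lemma ideal_move {a b : ℕ} {I : Finset (Fin (a + b + 1))}
    (hI : IsFenceIdeal [a, b] I) {x y : ℕ} (hx : x < a + b + 1) (hy : y < a + b + 1)
    (hle : fenceLe [a, b] x y) (hyI : (⟨y, hy⟩ : Fin (a + b + 1)) ∈ I) :
    (⟨x, hx⟩ : Fin (a + b + 1)) ∈ I :=
  hI ⟨x, hx⟩ ⟨y, hy⟩ hle hyI

/-- down-closed finsets of ℕ are initial ranges -/
lemma eq_range_of_downclosed (S : Finset ℕ) (h : ∀ x y : ℕ, x ≤ y → y ∈ S → x ∈ S) :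
    S = Finset.range S.card := by
  rcases S.eq_empty_or_nonempty with h0 | h0
  · simp [h0]
  · obtain ⟨m, hm⟩ : ∃ m, m = S.max' h0 := ⟨_, rfl⟩
    have hS : S = Finset.Iic m := by
      ext x
      constructor
      · intro hx; rw [Finset.mem_Iic, hm]; exact S.le_max' x hx
      · intro hx
        refine h x m (Finset.mem_Iic.1 hx) ?_
        rw [hm]; exact S.max'_mem h0
    have hc : S.card = m + 1 := by rw [hS, Nat.card_Iic]
    rw [hc, hS]
    ext x
    simp [Nat.lt_succ_iff]

/-- up-closed finsets of positive naturals inside Iic d are final segments -/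
lemma eq_Ioc_of_upclosed (S : Finset ℕ) (d : ℕ) (hSd : ∀ x ∈ S, 0 < x ∧ x ≤ d)
    (h : ∀ x y : ℕ, x ≤ y → y ≤ d → x ∈ S → y ∈ S) :
    S = Finset.Ioc (d - S.card) d := by
  rcases S.eq_empty_or_nonempty with h0 | h0
  · simp [h0]
  · obtain ⟨m, hm⟩ : ∃ m, m = S.min' h0 := ⟨_, rfl⟩
    have hmS : m ∈ S := by rw [hm]; exact S.min'_mem h0
    have hS : S = Finset.Icc m d := by
      ext x
      constructor
      · intro hx
        rw [Finset.mem_Icc]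
        exact ⟨hm ▸ S.min'_le x hx, (hSd x hx).2⟩
      · intro hx
        exact h m x (Finset.mem_Icc.1 hx).1 (Finset.mem_Icc.1 hx).2 hmS
    have hmd : 0 < m ∧ m ≤ d := hSd m hmS
    have hc : S.card = d + 1 - m := by rw [hS, Nat.card_Icc]
    rw [hc, hS]
    ext x
    simp only [Finset.mem_Icc, Finset.mem_Ioc]
    omega

def U (a b i j : ℕ) : Finset ℕ := Finset.range i ∪ Finset.Ioc (a + b - j) (a + b)

lemma mem_U {a b i j m : ℕ} : m ∈ U a b i j ↔ m < i ∨ (a + b - j < m ∧ m ≤ a + b) := by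
  simp [U]

lemma card_U {a b i j : ℕ} (hi : i ≤ a + 1) (hj : j ≤ b) : (U a b i j).card = i + j := by
  have hd : Disjoint (Finset.range i) (Finset.Ioc (a + b - j) (a + b)) := by
    rw [Finset.disjoint_left]
    intro m hm hm'
    simp only [Finset.mem_range] at hm
    simp only [Finset.mem_Ioc] at hm'
    omega
  rw [U, Finset.card_union_of_disjoint hd, Finset.card_range, Nat.card_Ioc]
  omega

def idealOf (a b i j : ℕ) : Finset (Fin (a + b + 1)) :=
  Finset.univ.filter (fun p : Fin (a + b + 1) => (p : ℕ) ∈ U a b i j)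

lemma mem_idealOf {a b i j : ℕ} {p : Fin (a + b + 1)} :
    p ∈ idealOf a b i j ↔ (p : ℕ) ∈ U a b i j := by
  simp [idealOf]

lemma card_idealOf {a b i j : ℕ} (hi : i ≤ a + 1) (hj : j ≤ b) :
    (idealOf a b i j).card = i + j := by
  rw [← card_U hi hj]
  refine Finset.card_bij (fun p _ => (p : ℕ)) ?_ ?_ ?_
  · intro p hp; exact mem_idealOf.1 hp
  · intro p _ q _ h; exact Fin.val_injective h
  · intro m hm
    have hm' : m < a + b + 1 := by
      have h2 := mem_U.1 hm; omega
    exact ⟨⟨m, hm'⟩, mem_idealOf.2 hm, rfl⟩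

lemma ideal_iff {a b : ℕ} (ha : 0 < a) (hb : 0 < b) (I : Finset (Fin (a + b + 1))) :
    IsFenceIdeal [a, b] I ↔ ∃ i j : ℕ, i ≤ a + 1 ∧ j ≤ b ∧ (i = a + 1 → j = b) ∧
      I = idealOf a b i j := by
  constructor
  · intro hI
    by_cases hA : (⟨a, by omega⟩ : Fin (a + b + 1)) ∈ I
    · refine ⟨a + 1, b, le_refl _, le_refl _, fun _ => rfl, ?_⟩
      ext p
      simp only [mem_idealOf, mem_U]
      have hp' : (p : ℕ) < a + b + 1 := p.isLt
      constructor
      · intro _; omega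
      · intro _
        rcases le_or_gt (p : ℕ) a with hp | hp
        · exact ideal_move hI hp' (by omega)
            (fenceLe_pair.2 (Or.inr (Or.inl ⟨hp, le_refl a⟩))) hA
        · exact ideal_move hI hp' (by omega)
            (fenceLe_pair.2 (Or.inr (Or.inr ⟨le_refl a, le_of_lt hp, by omega⟩))) hA
    · set N : Finset ℕ := I.image Fin.val with hN
      have memN : ∀ m : ℕ, m ∈ N ↔ ∃ h : m < a + b + 1, (⟨m, h⟩ : Fin (a+b+1)) ∈ I := by
        intro m
        simp only [hN, Finset.mem_image]
        constructor
        · rintro ⟨p, hp, rfl⟩; exact ⟨p.isLt, by simpa using hp⟩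
        · rintro ⟨h, hm⟩; exact ⟨⟨m, h⟩, hm, rfl⟩
      set SL : Finset ℕ := N.filter (· ≤ a) with hSL
      set SR : Finset ℕ := N.filter (a < ·) with hSR
      have hLrange : SL = Finset.range SL.card := by
        apply eq_range_of_downclosed
        intro x y hxy hy
        simp only [hSL, Finset.mem_filter] at hy ⊢
        obtain ⟨hyN, hya⟩ := hy
        obtain ⟨hy1, hy2⟩ := (memN y).1 hyN
        refine ⟨(memN x).2 ⟨by omega, ?_⟩, by omega⟩
        exact ideal_move hI (by omega) hy1
          (fenceLe_pair.2 (Or.inr (Or.inl ⟨hxy, hya⟩))) hy2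
      have hmemL : ∀ m : ℕ, m ∈ SL ↔ m < SL.card := by
        intro m
        conv_lhs => rw [hLrange]
        exact Finset.mem_range
      have hRIoc : SR = Finset.Ioc (a + b - SR.card) (a + b) := by
        apply eq_Ioc_of_upclosed
        · intro x hx
          simp only [hSR, Finset.mem_filter] at hx
          obtain ⟨h1, h2⟩ := (memN x).1 hx.1
          omega
        · intro x y hxy hyd hx
          simp only [hSR, Finset.mem_filter] at hx ⊢
          obtain ⟨hxN, hxa⟩ := hx
          obtain ⟨hx1, hx2⟩ := (memN x).1 hxN
          refine ⟨(memN y).2 ⟨by omega, ?_⟩, by omega⟩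
          exact ideal_move hI (by omega) hx1
            (fenceLe_pair.2 (Or.inr (Or.inr ⟨by omega, hxy, hyd⟩))) hx2
      have hmemR : ∀ m : ℕ, m ∈ SR ↔ (a + b - SR.card < m ∧ m ≤ a + b) := by
        intro m
        conv_lhs => rw [hRIoc]
        exact Finset.mem_Ioc
      have hLa : SL.card ≤ a := by
        by_contra hcon
        have haSL : a ∈ SL := (hmemL a).2 (by omega)
        simp only [hSL, Finset.mem_filter] at haSL
        obtain ⟨h1, h2⟩ := (memN a).1 haSL.1
        exact hA h2
      have hRb : SR.card ≤ b := by
        have hsub : SR ⊆ Finset.Ioc a (a + b) := by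
          intro x hx
          simp only [hSR, Finset.mem_filter] at hx
          obtain ⟨h1, h2⟩ := (memN x).1 hx.1
          simp only [Finset.mem_Ioc]
          omega
        calc SR.card ≤ (Finset.Ioc a (a+b)).card := Finset.card_le_card hsub
          _ = b := by rw [Nat.card_Ioc]; omega
      refine ⟨SL.card, SR.card, by omega, hRb, by omega, ?_⟩
      ext p
      have hp' : (p : ℕ) < a + b + 1 := p.isLt
      have hpN : p ∈ I ↔ (p : ℕ) ∈ N := by
        rw [memN]
        constructor
        · intro hp; exact ⟨p.isLt, by simpa using hp⟩
        · rintro ⟨h, hm⟩; simpa using hm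
      have hsplit : (p : ℕ) ∈ N ↔ (p : ℕ) ∈ SL ∨ (p : ℕ) ∈ SR := by
        simp only [hSL, hSR, Finset.mem_filter]
        rcases le_or_gt (p : ℕ) a with h | h
        · tauto
        · constructor
          · intro hp; right; exact ⟨hp, h⟩
          · rintro (⟨hp, _⟩ | ⟨hp, _⟩) <;> exact hp
      rw [mem_idealOf, mem_U, hpN, hsplit, hmemL, hmemR]
  · rintro ⟨i, j, hi, hj, hij, rfl⟩
    intro p q hle hq
    have hp' : (p : ℕ) < a + b + 1 := p.isLt
    have hq' : (q : ℕ) < a + b + 1 := q.isLt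
    replace hq : (q : ℕ) ∈ U a b i j := mem_idealOf.1 hq
    refine mem_idealOf.2 ?_
    rw [mem_U] at hq ⊢
    rcases fenceLe_pair.1 hle with h | h | h
    · omega
    · rcases hq with hq | hq
      · left; omega
      · omega
    · rcases hq with hq | hq
      · have hjb : j = b := hij (by omega)
        omega
      · omega

def T (a b k : ℕ) : Finset (ℕ × ℕ) :=
  ((Finset.range (a + 2)) ×ˢ (Finset.range (b + 1))).filter
    (fun x => (x.1 = a + 1 → x.2 = b) ∧ x.1 + x.2 = k)

lemma mem_T {a b k : ℕ} {x : ℕ × ℕ} :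
    x ∈ T a b k ↔ x.1 ≤ a + 1 ∧ x.2 ≤ b ∧ (x.1 = a + 1 → x.2 = b) ∧ x.1 + x.2 = k := by
  simp only [T, Finset.mem_filter, Finset.mem_product, Finset.mem_range]
  omega

lemma fenceRk_eq {a b : ℕ} (ha : 0 < a) (hb : 0 < b) (k : ℕ) :
    fenceRk [a, b] k = (T a b k).card := by
  have e : {x : ℕ × ℕ // x ∈ T a b k} ≃
      {I : Finset (Fin (a + b + 1)) // IsFenceIdeal [a, b] I ∧ I.card = k} := by
    refine Equiv.ofBijective (fun x => ⟨idealOf a b x.1.1 x.1.2, ?_, ?_⟩) ⟨?_, ?_⟩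
    · obtain ⟨hi, hj, hij, _⟩ := mem_T.1 x.2
      exact (ideal_iff ha hb _).2 ⟨x.1.1, x.1.2, hi, hj, hij, rfl⟩
    · obtain ⟨hi, hj, hij, hsum⟩ := mem_T.1 x.2
      rw [card_idealOf hi hj, hsum]
    · rintro ⟨⟨i, j⟩, hx⟩ ⟨⟨i', j'⟩, hx'⟩ h
      obtain ⟨hi, hj, hij, hsum⟩ := mem_T.1 hx
      obtain ⟨hi', hj', hij', hsum'⟩ := mem_T.1 hx'
      simp only [Subtype.mk.injEq] at h ⊢
      have hall : ∀ m : ℕ, m < a + b + 1 →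
          ((m < i ∨ (a + b - j < m ∧ m ≤ a + b)) ↔
           (m < i' ∨ (a + b - j' < m ∧ m ≤ a + b))) := by
        intro m hm
        have h2 := Finset.ext_iff.1 h (⟨m, hm⟩ : Fin (a + b + 1))
        simpa only [mem_idealOf, mem_U] using h2
      simp only at hi hj hij hsum hi' hj' hij' hsum'
      have h1 := hall (min i i') (by omega)
      have hii : i = i' := by omega
      subst hii
      by_cases hjj : j = j'
      · rw [hjj]
      · have hmax : 1 ≤ max j j' := by omega
        have h2 := hall (a + b - max j j' + 1) (by omega)
        have : j = j' := by omega
        rw [this]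
    · rintro ⟨I, hI, hcard⟩
      obtain ⟨i, j, hi, hj, hij, rfl⟩ := (ideal_iff ha hb I).1 hI
      rw [card_idealOf hi hj] at hcard
      exact ⟨⟨(i, j), mem_T.2 ⟨hi, hj, hij, hcard⟩⟩, rfl⟩
  have h0 : fenceRk [a, b] k =
      Nat.card {I : Finset (Fin (a + b + 1)) // IsFenceIdeal [a, b] I ∧ I.card = k} := rfl
  rw [h0, ← Nat.card_congr e]
  exact Nat.card_eq_finsetCard _

lemma T_card {a b k : ℕ} (hk : k ≤ a + b) : (T a b k).card = min a k + 1 - (k - b) := by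
  have himg : T a b k = (Finset.Icc (k - b) (min a k)).image (fun i => (i, k - i)) := by
    ext ⟨i, j⟩
    simp only [mem_T, Finset.mem_image, Finset.mem_Icc, Prod.mk.injEq]
    constructor
    · rintro ⟨hi, hj, hij, hsum⟩
      exact ⟨i, by omega, rfl, by omega⟩
    · rintro ⟨i', ⟨h1, h2⟩, rfl, rfl⟩
      exact ⟨by omega, by omega, by omega, by omega⟩
  rw [himg, Finset.card_image_of_injective _ (fun x y h => (Prod.ext_iff.1 h).1),
    Nat.card_Icc]

lemma T_card_top {a b : ℕ} : (T a b (a + b + 1)).card = 1 := by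
  have h : T a b (a + b + 1) = {(a + 1, b)} := by
    ext ⟨i, j⟩
    simp only [mem_T, Finset.mem_singleton, Prod.mk.injEq]
    omega
  rw [h, Finset.card_singleton]

end FenceAux

/-- For any two-part composition `α = (a,b)`, the rank sequence of `L(α)` is
bottom interlacing (the rank of `L(α)` is `n = a + b + 1`). -/
theorem fence_two_segments_bottomInterlacing (a b : ℕ) (ha : 0 < a) (hb : 0 < b) :
    BottomInterlacing (fenceRk [a, b]) (a + b + 1) := by
  constructor
  · intro i hi
    rcases Nat.eq_zero_or_pos i with rfl | hip
    · rw [Nat.sub_zero, FenceAux.fenceRk_eq ha hb, FenceAux.fenceRk_eq ha hb,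
        FenceAux.T_card_top, FenceAux.T_card (by omega)]
      omega
    · rw [FenceAux.fenceRk_eq ha hb, FenceAux.fenceRk_eq ha hb,
        FenceAux.T_card (k := a + b + 1 - i) (by omega), FenceAux.T_card (by omega)]
      omega
  · intro i hi
    rw [FenceAux.fenceRk_eq ha hb, FenceAux.fenceRk_eq ha hb,
      FenceAux.T_card (by omega), FenceAux.T_card (k := a + b + 1 - 1 - i) (by omega)]
    have h : a + b + 1 - 1 - i = a + b - i := by omega
    rw [h]
    omega
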